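/- No universal bound on partial energies of probability measures on the bi-tree: for every function F : (1,∞) → (0,∞) there exist a real number x > 1, an integer N ≥ 1, and a probability measure μ (|μ| = 1) on the boundary of the bi-tree T² of depth N such that E_x[μ] = ∑_{α∈T² : V^μ(α) ≤ x} (𝕀*μ(α))² > F(x). -/

import Mathlib

open Finset

def strings : ℕ → Finset (List Bool)
  | 0 => {([] : List Bool)}
  | N + 1 =>
      {([] : List Bool)} ∪ (strings N).image (List.cons true) ∪ (strings N).image (List.cons false)

/-- Vertices of the bi-tree `T²` of depth `N`: pairs of binary strings of length at most `N`,
ordered by `(α,β) ≤ (α',β')` iff `α' <+: α` and `β' <+: β`. -/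
def biVertices (N : ℕ) : Finset (List Bool × List Bool) := strings N ×ˢ strings N

/-- `𝕀 f (p) = ∑_{p' ≥ p} f p'`. -/
noncomputable def biI (N : ℕ) (f : List Bool × List Bool → ℝ) (p : List Bool × List Bool) : ℝ :=
  ∑ q ∈ (biVertices N).filter (fun q => q.1 <+: p.1 ∧ q.2 <+: p.2), f q

/-- `𝕀* f (p) = ∑_{p' ≤ p} f p'`. -/
noncomputable def biIstar (N : ℕ) (f : List Bool × List Bool → ℝ) (p : List Bool × List Bool) : ℝ :=
  ∑ q ∈ (biVertices N).filter (fun q => p.1 <+: q.1 ∧ p.2 <+: q.2), f q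

/-- The potential `V^μ = 𝕀 (𝕀* μ)` on the bi-tree. -/
noncomputable def biV (N : ℕ) (μ : List Bool × List Bool → ℝ) : List Bool × List Bool → ℝ :=
  biI N (biIstar N μ)

/-- The total mass `|μ|`. -/
noncomputable def biMass (N : ℕ) (μ : List Bool × List Bool → ℝ) : ℝ :=
  ∑ p ∈ biVertices N, μ p

/-- A measure on the boundary `∂T²`: a nonnegative function vanishing off pairs of strings
both of length exactly `N`. -/
def IsBiMeasureOnBoundary (N : ℕ) (μ : List Bool × List Bool → ℝ) : Prop :=
  (∀ p, 0 ≤ μ p) ∧ ∀ p, μ p ≠ 0 → p.1.length = N ∧ p.2.length = N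

/-- The energy `E[ν] = ∑_{α∈T²} (𝕀*ν(α))²`. -/
noncomputable def biEnergy (N : ℕ) (ν : List Bool × List Bool → ℝ) : ℝ :=
  ∑ p ∈ biVertices N, (biIstar N ν p) ^ 2

/-- The partial energy `E_ε[ν] = ∑_{α∈T² : V^ν(α) ≤ ε} (𝕀*ν(α))²`. -/
noncomputable def biPartialEnergy (N : ℕ) (ν : List Bool × List Bool → ℝ) (ε : ℝ) : ℝ :=
  ∑ p ∈ (biVertices N).filter (fun p => biV N ν p ≤ ε), (biIstar N ν p) ^ 2

/-- `cap(E) = inf { ∑ f² : f ≥ 0, 𝕀f ≥ 1 on E }` on the bi-tree of depth `N`. -/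
noncomputable def biCap (N : ℕ) (E : Set (List Bool × List Bool)) : ℝ :=
  sInf { t : ℝ | ∃ f : List Bool × List Bool → ℝ, (∀ p, 0 ≤ f p) ∧
    (∀ p ∈ E, 1 ≤ biI N f p) ∧ t = ∑ p ∈ biVertices N, (f p) ^ 2 }

/-- Superadditivity in each variable on the bi-tree of depth `N`. -/
def BiSuperadditive (N : ℕ) (g : List Bool × List Bool → ℝ) : Prop :=
  (∀ α β : List Bool, α.length < N → β.length ≤ N →
    g (α ++ [false], β) + g (α ++ [true], β) ≤ g (α, β)) ∧
  (∀ α β : List Bool, α.length ≤ N → β.length < N →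
    g (α, β ++ [false]) + g (α, β ++ [true]) ≤ g (α, β))

/- ### basic string lemmas -/

lemma mem_strings {N : ℕ} {l : List Bool} : l ∈ strings N ↔ l.length ≤ N := by
  induction N generalizing l with
  | zero => simp [strings, List.length_eq_zero_iff]
  | succ N ih =>
    simp only [strings, mem_union, mem_image, mem_singleton]
    constructor
    · rintro ((rfl | ⟨t, ht, rfl⟩) | ⟨t, ht, rfl⟩) <;>
        simp_all <;> omega
    · intro h
      match l with
      | [] => left; left; rfl
      | b :: t =>
        have ht : t ∈ strings N := ih.2 (by simpa using h)
        cases b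
        · right; exact ⟨t, ht, rfl⟩
        · left; right; exact ⟨t, ht, rfl⟩

/- ### the construction -/

def bit1 (a u : ℕ) : Bool := a.testBit u
def bit2 (m a u : ℕ) : Bool := decide (u < m) && a.testBit (m - 1 - u)

def sig (m a : ℕ) : List Bool := (List.range (2^m)).map (bit1 a)
def tau (m a : ℕ) : List Bool := (List.range (2^m)).map (bit2 m a)

noncomputable def mu (m : ℕ) : List Bool × List Bool → ℝ := fun p =>
  ∑ a ∈ range (2^m), if p = (sig m a, tau m a) then ((2:ℝ)^m)⁻¹ else 0

lemma sig_length (m a : ℕ) : (sig m a).length = 2^m := by simp [sig]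
lemma tau_length (m a : ℕ) : (tau m a).length = 2^m := by simp [tau]

lemma sig_take (m a s : ℕ) (hs : s ≤ 2^m) :
    (sig m a).take s = (List.range s).map (bit1 a) := by
  simp [sig, ← List.map_take, List.take_range, Nat.min_eq_left hs]

lemma tau_take (m a s : ℕ) (hs : s ≤ 2^m) :
    (tau m a).take s = (List.range s).map (bit2 m a) := by
  simp [tau, ← List.map_take, List.take_range, Nat.min_eq_left hs]

lemma map_range_eq_iff {f g : ℕ → Bool} {s : ℕ} :
    (List.range s).map f = (List.range s).map g ↔ ∀ u < s, f u = g u := by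
  constructor
  · intro h u hu
    have := congrArg (fun l => l[u]?) h
    simpa [hu] using this
  · intro h
    apply List.ext_getElem (by simp)
    intro u h1 h2
    simp only [List.getElem_map, List.getElem_range]
    exact h u (by simpa using h1)

lemma sig_mem (m a : ℕ) : sig m a ∈ strings (2^m) := mem_strings.2 (by simp [sig])
lemma tau_mem (m a : ℕ) : tau m a ∈ strings (2^m) := mem_strings.2 (by simp [tau])

lemma pair_mem (m a : ℕ) : (sig m a, tau m a) ∈ biVertices (2^m) := by
  simp [biVertices, sig_mem, tau_mem]

/- ### measure basics -/

lemma mu_nonneg (m : ℕ) (p) : 0 ≤ mu m p := by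
  apply Finset.sum_nonneg; intro a _; positivity

lemma mu_boundary (m : ℕ) : IsBiMeasureOnBoundary (2^m) (mu m) := by
  refine ⟨mu_nonneg m, fun p hp => ?_⟩
  obtain ⟨a, _, ha⟩ := Finset.exists_ne_zero_of_sum_ne_zero hp
  have : p = (sig m a, tau m a) := by by_contra h; simp [h] at ha
  subst this; exact ⟨sig_length m a, tau_length m a⟩

lemma mu_mass (m : ℕ) : biMass (2^m) (mu m) = 1 := by
  unfold biMass mu
  rw [Finset.sum_comm]
  have : ∀ a ∈ range (2^m),
      (∑ p ∈ biVertices (2^m), if p = (sig m a, tau m a) then ((2:ℝ)^m)⁻¹ else 0)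
        = ((2:ℝ)^m)⁻¹ := by
    intro a _
    rw [Finset.sum_ite_eq' (biVertices (2^m)) (sig m a, tau m a) (fun _ => ((2:ℝ)^m)⁻¹)]
    simp [pair_mem]
  rw [Finset.sum_congr rfl this]
  simp

/- ### Istar as a count -/

lemma biIstar_eq_count (m : ℕ) (q : List Bool × List Bool) :
    biIstar (2^m) (mu m) q =
      ((range (2^m)).filter (fun a => q.1 <+: sig m a ∧ q.2 <+: tau m a)).card
        * ((2:ℝ)^m)⁻¹ := by
  unfold biIstar mu
  rw [Finset.sum_comm]
  have : ∀ a ∈ range (2^m),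
      (∑ q' ∈ (biVertices (2^m)).filter (fun q' => q.1 <+: q'.1 ∧ q.2 <+: q'.2),
        if q' = (sig m a, tau m a) then ((2:ℝ)^m)⁻¹ else 0)
      = if q.1 <+: sig m a ∧ q.2 <+: tau m a then ((2:ℝ)^m)⁻¹ else 0 := by
    intro a _
    rw [Finset.sum_ite_eq' _ (sig m a, tau m a) (fun _ => ((2:ℝ)^m)⁻¹)]
    simp [Finset.mem_filter, pair_mem]
  rw [Finset.sum_congr rfl this, Finset.sum_ite, Finset.sum_const, Finset.sum_const_zero,
    add_zero, nsmul_eq_mul]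

lemma biIstar_lower (m : ℕ) (a : ℕ) (ha : a ∈ range (2^m)) (i j : ℕ)
    (hi : i ≤ 2^m) (hj : j ≤ 2^m) :
    ((2:ℝ)^m)⁻¹ ≤ biIstar (2^m) (mu m) ((sig m a).take i, (tau m a).take j) := by
  rw [biIstar_eq_count]
  have h1 : a ∈ (range (2^m)).filter
      (fun a' => (sig m a).take i <+: sig m a' ∧ (tau m a).take j <+: tau m a') := by
    simp only [Finset.mem_filter]
    exact ⟨ha, List.take_prefix .., List.take_prefix ..⟩
  have hc : 1 ≤ ((range (2^m)).filter
      (fun a' => (sig m a).take i <+: sig m a' ∧ (tau m a).take j <+: tau m a')).card :=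
    Finset.card_pos.2 ⟨a, h1⟩
  calc ((2:ℝ)^m)⁻¹ = 1 * ((2:ℝ)^m)⁻¹ := by ring
  _ ≤ _ := by
      apply mul_le_mul_of_nonneg_right _ (by positivity)
      exact_mod_cast hc

/- ### agreement counting -/

def Cst (m a s t : ℕ) : Finset ℕ :=
  (range (2^m)).filter (fun a' =>
    (∀ u < s, bit1 a u = bit1 a' u) ∧ (∀ u < t, bit2 m a u = bit2 m a' u))

lemma bit2_eq (m a a' u : ℕ) (hu : u < m) (h : bit2 m a u = bit2 m a' u) :
    a.testBit (m - 1 - u) = a'.testBit (m - 1 - u) := by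
  simpa [bit2, hu] using h

lemma Cst_rigid (m a s t : ℕ) (ha : a < 2^m) (hst : m ≤ s + t) :
    Cst m a s t ⊆ {a} := by
  intro a' h
  simp only [Cst, Finset.mem_filter, Finset.mem_range] at h
  obtain ⟨ha', h1, h2⟩ := h
  simp only [Finset.mem_singleton]
  refine (Nat.eq_of_testBit_eq fun v => ?_).symm
  rcases lt_or_ge v m with hv | hv
  · rcases lt_or_ge v s with hvs | hvs
    · simpa [bit1] using h1 v hvs
    · have hu : m - 1 - v < t := by omega
      have hum : m - 1 - v < m := by omega
      have := bit2_eq m a a' (m - 1 - v) hum (h2 _ hu)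
      have hvv : m - 1 - (m - 1 - v) = v := by omega
      rwa [hvv] at this
  · rw [Nat.testBit_eq_false_of_lt (lt_of_lt_of_le ha' (Nat.pow_le_pow_right (by norm_num) hv)),
      Nat.testBit_eq_false_of_lt (lt_of_lt_of_le ha (Nat.pow_le_pow_right (by norm_num) hv))]

lemma Cst_card_le (m a s t : ℕ) (hst : s + t < m) :
    (Cst m a s t).card ≤ 2^(m - s - t) := by
  have : (Cst m a s t).card ≤ (range (2^(m - s - t))).card := by
    apply Finset.card_le_card_of_injOn (fun a' => (a' >>> s) % 2^(m - s - t))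
    · intro a' _
      simp only [Finset.mem_coe, Finset.mem_range]
      exact Nat.mod_lt _ (by positivity)
    · intro x hx y hy hxy
      simp only [Cst, Finset.coe_filter, Set.mem_setOf_eq, Finset.mem_range] at hx hy
      obtain ⟨hxk, hx1, hx2⟩ := hx
      obtain ⟨hyk, hy1, hy2⟩ := hy
      apply Nat.eq_of_testBit_eq
      intro v
      rcases lt_or_ge v m with hv | hv
      · rcases lt_or_ge v s with hvs | hvs
        · have e1 := (hx1 v hvs).symm.trans (hy1 v hvs)
          simpa [bit1] using e1
        · rcases lt_or_ge v (m - t) with hvt | hvt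
          · -- middle bits via hxy
            have hw : v - s < m - s - t := by omega
            have key : ∀ z : ℕ, ((z >>> s) % 2^(m - s - t)).testBit (v - s) = z.testBit v := by
              intro z
              rw [Nat.testBit_mod_two_pow, Nat.testBit_shiftRight]
              simp [hw, Nat.add_sub_cancel' hvs]
            have := congrArg (fun z => z.testBit (v - s)) hxy
            simpa [key] using this
          · have hu : m - 1 - v < t := by omega
            have hum : m - 1 - v < m := by omega
            have e1 := (bit2_eq m a x _ hum (hx2 _ hu)).symm.trans
              (bit2_eq m a y _ hum (hy2 _ hu))
            have hvv : m - 1 - (m - 1 - v) = v := by omega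
            rwa [hvv] at e1
      · rw [Nat.testBit_eq_false_of_lt (lt_of_lt_of_le hxk (Nat.pow_le_pow_right (by norm_num) hv)),
          Nat.testBit_eq_false_of_lt (lt_of_lt_of_le hyk (Nat.pow_le_pow_right (by norm_num) hv))]
  simpa using this

lemma geo_bound : ∀ n : ℕ, ∑ t ∈ range n, 2^(n - t) ≤ 2^(n+1) := by
  intro n
  induction n with
  | zero => simp
  | succ n ih =>
    rw [Finset.sum_range_succ']
    have h1 : ∑ t ∈ range n, 2^(n + 1 - (t + 1)) = ∑ t ∈ range n, 2^(n - t) := by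
      apply Finset.sum_congr rfl; intro t ht; congr 1; omega
    rw [h1]
    have : (2:ℕ)^(n + 1 - 0) = 2^(n+1) := by norm_num
    rw [this]
    calc ∑ t ∈ range n, 2^(n - t) + 2^(n+1) ≤ 2^(n+1) + 2^(n+1) := by omega
    _ = 2^(n+2) := by ring

/- ### potential bound -/

lemma nat_sum_bound (m a i j : ℕ) (ha : a < 2^m) (hij : (i+1)*(j+1) ≤ 2^m) :
    ∑ st ∈ range (i+1) ×ˢ range (j+1), (Cst m a st.1 st.2).card ≤ 5 * 2^m := by
  have step1 : ∀ st ∈ range (i+1) ×ˢ range (j+1),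
      (Cst m a st.1 st.2).card ≤ (if st.1 + st.2 < m then 2^(m - st.1 - st.2) else 0) + 1 := by
    intro st _
    rcases lt_or_ge (st.1 + st.2) m with h | h
    · simp only [if_pos h]
      have := Cst_card_le m a st.1 st.2 h
      omega
    · simp only [if_neg (not_lt.2 h)]
      have := Finset.card_le_card (Cst_rigid m a st.1 st.2 ha h)
      simpa using this
  calc ∑ st ∈ range (i+1) ×ˢ range (j+1), (Cst m a st.1 st.2).card
      ≤ ∑ st ∈ range (i+1) ×ˢ range (j+1),
          ((if st.1 + st.2 < m then 2^(m - st.1 - st.2) else 0) + 1) :=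
        Finset.sum_le_sum step1
    _ = (∑ st ∈ range (i+1) ×ˢ range (j+1),
          (if st.1 + st.2 < m then 2^(m - st.1 - st.2) else 0)) + (i+1)*(j+1) := by
        rw [Finset.sum_add_distrib]; simp [Finset.sum_const, mul_comm]
    _ ≤ 4 * 2^m + 2^m := by
        have hsub : ∑ st ∈ range (i+1) ×ˢ range (j+1),
            (if st.1 + st.2 < m then 2^(m - st.1 - st.2) else 0)
            ≤ ∑ st ∈ (range (i+1) ×ˢ range (j+1)) ∪ (range m ×ˢ range m),
            (if st.1 + st.2 < m then 2^(m - st.1 - st.2) else 0) :=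
          Finset.sum_le_sum_of_subset Finset.subset_union_left
        have hsub2 : ∑ st ∈ (range (i+1) ×ˢ range (j+1)) ∪ (range m ×ˢ range m),
            (if st.1 + st.2 < m then 2^(m - st.1 - st.2) else 0)
            = ∑ st ∈ range m ×ˢ range m,
            (if st.1 + st.2 < m then 2^(m - st.1 - st.2) else 0) := by
          refine (Finset.sum_subset Finset.subset_union_right ?_).symm
          intro st hst hnot
          simp only [Finset.mem_product, Finset.mem_range, not_and_or, not_lt] at hnot
          rw [if_neg (by omega)]
        have hmain : ∑ st ∈ range m ×ˢ range m,
            (if st.1 + st.2 < m then 2^(m - st.1 - st.2) else 0) ≤ 4 * 2^m := by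
          rw [Finset.sum_product]
          have inner : ∀ s ∈ range m,
              ∑ t ∈ range m, (if s + t < m then 2^(m - s - t) else 0) ≤ 2 * 2^(m - s) := by
            intro s hs
            have h1 : ∑ t ∈ range m, (if s + t < m then 2^(m - s - t) else 0)
                = ∑ t ∈ range (m - s), 2^(m - s - t) := by
              rw [← Finset.sum_subset (Finset.range_subset_range.2 (by omega : m - s ≤ m))
                (fun t _ ht => by
                  simp only [Finset.mem_range, not_lt] at ht
                  rw [if_neg (by omega)])]
              apply Finset.sum_congr rfl
              intro t ht
              simp only [Finset.mem_range] at ht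
              rw [if_pos (by omega)]
            rw [h1]
            calc ∑ t ∈ range (m - s), 2^(m - s - t) ≤ 2^(m - s + 1) := geo_bound (m - s)
              _ = 2 * 2^(m - s) := by ring
          calc ∑ s ∈ range m, ∑ t ∈ range m, (if s + t < m then 2^(m - s - t) else 0)
              ≤ ∑ s ∈ range m, 2 * 2^(m - s) := Finset.sum_le_sum inner
            _ = 2 * ∑ s ∈ range m, 2^(m - s) := by rw [Finset.mul_sum]
            _ ≤ 2 * 2^(m+1) := by
                have := geo_bound m; omega
            _ = 4 * 2^m := by ring
        omega
    _ = 5 * 2^m := by ring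

lemma biV_le (m a i j : ℕ) (ha : a < 2^m) (hi : i ≤ 2^m) (hj : j ≤ 2^m)
    (hij : (i+1)*(j+1) ≤ 2^m) :
    biV (2^m) (mu m) ((sig m a).take i, (tau m a).take j) ≤ 5 := by
  set p : List Bool × List Bool := ((sig m a).take i, (tau m a).take j) with hp
  have hp1 : p.1.length = i := by simp [hp, sig_length, Nat.min_eq_left hi]
  have hp2 : p.2.length = j := by simp [hp, tau_length, Nat.min_eq_left hj]
  set Qp := (biVertices (2^m)).filter (fun q => q.1 <+: p.1 ∧ q.2 <+: p.2) with hQp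
  have hkey : ∑ q ∈ Qp, ((range (2^m)).filter
      (fun a' => q.1 <+: sig m a' ∧ q.2 <+: tau m a')).card ≤ 5 * 2^m := by
    have e1 : ∀ q ∈ Qp, ((range (2^m)).filter
        (fun a' => q.1 <+: sig m a' ∧ q.2 <+: tau m a')).card
        = ∑ a' ∈ range (2^m), if q.1 <+: sig m a' ∧ q.2 <+: tau m a' then 1 else 0 := by
      intro q _; rw [Finset.card_filter]
    rw [Finset.sum_congr rfl e1, Finset.sum_comm]
    have e2 : ∀ a' ∈ range (2^m),
        (∑ q ∈ Qp, if q.1 <+: sig m a' ∧ q.2 <+: tau m a' then 1 else 0)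
        = (Qp.filter (fun q => q.1 <+: sig m a' ∧ q.2 <+: tau m a')).card := by
      intro a' _; rw [Finset.card_filter]
    rw [Finset.sum_congr rfl e2]
    -- per a' : card ≤ card of grid filter
    have e3 : ∀ a' ∈ range (2^m),
        (Qp.filter (fun q => q.1 <+: sig m a' ∧ q.2 <+: tau m a')).card
        ≤ ((range (i+1) ×ˢ range (j+1)).filter (fun st =>
            (∀ u < st.1, bit1 a u = bit1 a' u) ∧ (∀ u < st.2, bit2 m a u = bit2 m a' u))).card := by
      intro a' _
      apply Finset.card_le_card_of_injOn (fun q => (q.1.length, q.2.length))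
      · intro q hq
        simp only [hQp, Finset.mem_coe, Finset.mem_filter] at hq
        obtain ⟨⟨_, hq1, hq2⟩, hc1, hc2⟩ := hq
        have hs : q.1.length ≤ i := hp1 ▸ hq1.length_le
        have ht : q.2.length ≤ j := hp2 ▸ hq2.length_le
        have ha1 : q.1 <+: sig m a := hq1.trans (List.take_prefix i (sig m a))
        have ha2 : q.2 <+: tau m a := hq2.trans (List.take_prefix j (tau m a))
        simp only [Finset.mem_coe, Finset.mem_filter, Finset.mem_product, Finset.mem_range]
        refine ⟨⟨by omega, by omega⟩, ?_, ?_⟩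
        · rw [← map_range_eq_iff (f := bit1 a) (g := bit1 a')]
          have d1 : q.1 = (sig m a).take q.1.length := List.prefix_iff_eq_take.1 ha1
          have d2 : q.1 = (sig m a').take q.1.length := List.prefix_iff_eq_take.1 hc1
          rw [← sig_take m a _ (le_trans hs hi), ← sig_take m a' _ (le_trans hs hi),
            ← d1, ← d2]
        · rw [← map_range_eq_iff (f := bit2 m a) (g := bit2 m a')]
          have d1 : q.2 = (tau m a).take q.2.length := List.prefix_iff_eq_take.1 ha2
          have d2 : q.2 = (tau m a').take q.2.length := List.prefix_iff_eq_take.1 hc2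
          rw [← tau_take m a _ (le_trans ht hj), ← tau_take m a' _ (le_trans ht hj),
            ← d1, ← d2]
      · intro q hq q' hq' hee
        simp only [hQp, Finset.coe_filter, Set.mem_setOf_eq, Finset.mem_filter] at hq hq'
        have hq1 : q.1 <+: p.1 := hq.1.2.1
        have hq2 : q.2 <+: p.2 := hq.1.2.2
        have hq1' : q'.1 <+: p.1 := hq'.1.2.1
        have hq2' : q'.2 <+: p.2 := hq'.1.2.2
        have l1 : q.1.length = q'.1.length := congrArg Prod.fst hee
        have l2 : q.2.length = q'.2.length := congrArg Prod.snd hee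
        have c1 : q.1 = q'.1 := by
          rw [List.prefix_iff_eq_take.1 hq1, List.prefix_iff_eq_take.1 hq1', l1]
        have c2 : q.2 = q'.2 := by
          rw [List.prefix_iff_eq_take.1 hq2, List.prefix_iff_eq_take.1 hq2', l2]
        exact Prod.ext c1 c2
    calc ∑ a' ∈ range (2^m), (Qp.filter (fun q => q.1 <+: sig m a' ∧ q.2 <+: tau m a')).card
        ≤ ∑ a' ∈ range (2^m), ((range (i+1) ×ˢ range (j+1)).filter (fun st =>
            (∀ u < st.1, bit1 a u = bit1 a' u) ∧ (∀ u < st.2, bit2 m a u = bit2 m a' u))).card :=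
          Finset.sum_le_sum e3
      _ = ∑ st ∈ range (i+1) ×ˢ range (j+1), (Cst m a st.1 st.2).card := by
          rw [Finset.sum_congr rfl (fun a' _ => Finset.card_filter _ _), Finset.sum_comm]
          apply Finset.sum_congr rfl
          intro st _
          rw [Cst, Finset.card_filter]
      _ ≤ 5 * 2^m := nat_sum_bound m a i j ha hij
  -- convert to the real statement
  unfold biV biI
  rw [Finset.sum_congr rfl (fun q (_ : q ∈ Qp) => biIstar_eq_count m q)]
  rw [← Finset.sum_mul]
  rw [← Nat.cast_sum]
  have h2m : (0:ℝ) < (2:ℝ)^m := by positivity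
  calc (↑(∑ q ∈ Qp, ((range (2^m)).filter
        (fun a' => q.1 <+: sig m a' ∧ q.2 <+: tau m a')).card) : ℝ) * ((2:ℝ)^m)⁻¹
      ≤ (5 * 2^m : ℕ) * ((2:ℝ)^m)⁻¹ := by
        apply mul_le_mul_of_nonneg_right _ (by positivity)
        exact_mod_cast hkey
    _ = 5 := by
        push_cast
        field_simp

/- ### the good set and the energy lower bound -/

lemma pow_ineq' : ∀ n : ℕ, 3*n+4 ≤ 2^(n+2) := by
  intro n
  induction n with
  | zero => norm_num
  | succ n ih =>
    have h2 : (2:ℕ)^(n+1+2) = 2^(n+2) * 2 := by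
      rw [show n+1+2 = (n+2)+1 by omega, pow_succ]
    omega

lemma pow_ineq : ∀ n : ℕ, 3*n+1 ≤ 2^(n+1) := by
  intro n
  cases n with
  | zero => norm_num
  | succ n =>
    have := pow_ineq' n
    have h2 : (2:ℕ)^(n+1+1) = 2^(n+2) := by rw [show n+1+1 = n+2 by omega]
    omega

lemma take_sig_inj (m : ℕ) {a a' i i' : ℕ} (ha : a < 2^m) (ha' : a' < 2^m)
    (hmi : m ≤ i) (hi : i ≤ 2^m) (hii' : i = i')
    (h : (sig m a).take i = (sig m a').take i') : a = a' := by
  subst hii'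
  rw [sig_take m a i hi, sig_take m a' i hi, map_range_eq_iff] at h
  apply Nat.eq_of_testBit_eq
  intro v
  rcases lt_or_ge v m with hv | hv
  · simpa [bit1] using h v (by omega)
  · rw [Nat.testBit_eq_false_of_lt (lt_of_lt_of_le ha (Nat.pow_le_pow_right (by norm_num) hv)),
      Nat.testBit_eq_false_of_lt (lt_of_lt_of_le ha' (Nat.pow_le_pow_right (by norm_num) hv))]

lemma main_lower (r : ℕ) :
    ((2^r - r : ℕ) : ℝ) / 2 ≤ biPartialEnergy (2^(2^r)) (mu (2^r)) 5 := by
  set m := 2^r with hm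
  have hrm : r + 1 ≤ m := Nat.lt_two_pow_self (n := r)
  set T := m - r - 1 with hT
  set G : Finset (ℕ × ℕ) := (range (T+1)).biUnion
    (fun t => Finset.Ico (2^(m-t-1)) (2^(m-t)) ×ˢ range (2^t)) with hG
  have hmem : ∀ ij ∈ G, m ≤ ij.1 ∧ ij.1 ≤ 2^m ∧ ij.2 ≤ 2^m ∧ (ij.1+1)*(ij.2+1) ≤ 2^m := by
    intro ij hij
    simp only [hG, Finset.mem_biUnion, Finset.mem_product, Finset.mem_Ico,
      Finset.mem_range] at hij
    obtain ⟨t, ht, ⟨hi1, hi2⟩, hj⟩ := hij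
    have htm : t ≤ m - r - 1 := by omega
    have h1 : m ≤ 2^(m-t-1) := by
      calc m = 2^r := hm
      _ ≤ 2^(m-t-1) := Nat.pow_le_pow_right (by norm_num) (by omega)
    have h2 : (2:ℕ)^(m-t) ≤ 2^m := Nat.pow_le_pow_right (by norm_num) (by omega)
    have h3 : (2:ℕ)^t ≤ 2^m := Nat.pow_le_pow_right (by norm_num) (by omega)
    have h4 : (ij.1+1)*(ij.2+1) ≤ 2^(m-t) * 2^t := by
      apply Nat.mul_le_mul <;> omega
    have h5 : (2:ℕ)^(m-t) * 2^t = 2^m := by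
      rw [← pow_add]; congr 1; omega
    exact ⟨le_trans h1 hi1, by omega, by omega, by omega⟩
  have hGcard : G.card = (T+1) * 2^(m-1) := by
    rw [hG, Finset.card_biUnion]
    · have : ∀ t ∈ range (T+1),
          (Finset.Ico (2^(m-t-1)) (2^(m-t)) ×ˢ range (2^t)).card = 2^(m-1) := by
        intro t ht
        simp only [Finset.mem_range] at ht
        rw [Finset.card_product, Nat.card_Ico, Finset.card_range]
        have e1 : (2:ℕ)^(m-t) = 2 * 2^(m-t-1) := by
          rw [← pow_succ']; congr 1; omega
        have e2 : (2:ℕ)^(m-t-1) * 2^t = 2^(m-1) := by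
          rw [← pow_add]; congr 1; omega
        rw [e1, Nat.two_mul, Nat.add_sub_cancel, e2]
      rw [Finset.sum_congr rfl this, Finset.sum_const, Finset.card_range, smul_eq_mul]
    · intro t ht t' ht' htt'
      simp only [Finset.mem_coe, Finset.mem_range] at ht ht'
      rw [Function.onFun, Finset.disjoint_left]
      intro ij h1 h2
      simp only [Finset.mem_product, Finset.mem_Ico, Finset.mem_range] at h1 h2
      rcases lt_or_gt_of_ne htt' with hlt | hlt
      · have : (2:ℕ)^(m-t') ≤ 2^(m-t-1) := Nat.pow_le_pow_right (by norm_num) (by omega)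
        omega
      · have : (2:ℕ)^(m-t) ≤ 2^(m-t'-1) := Nat.pow_le_pow_right (by norm_num) (by omega)
        omega
  set f : ℕ × (ℕ × ℕ) → List Bool × List Bool :=
    fun x => ((sig m x.1).take x.2.1, (tau m x.1).take x.2.2) with hf
  set S : Finset (List Bool × List Bool) := ((range (2^m)) ×ˢ G).image f with hS
  have hinj : Set.InjOn f ↑((range (2^m)) ×ˢ G) := by
    intro x hx y hy hxy
    simp only [Finset.coe_product, Set.mem_prod, Finset.mem_coe, Finset.mem_range] at hx hy
    obtain ⟨hxa, hxG⟩ := hx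
    obtain ⟨hya, hyG⟩ := hy
    obtain ⟨hxm, hxi, hxj, _⟩ := hmem _ hxG
    obtain ⟨hym, hyi, hyj, _⟩ := hmem _ hyG
    have e1 := congrArg (fun p => p.1.length) hxy
    have e2 := congrArg (fun p => p.2.length) hxy
    simp only [hf, List.length_take, sig_length, tau_length] at e1 e2
    have hii : x.2.1 = y.2.1 := by omega
    have hjj : x.2.2 = y.2.2 := by omega
    have haa : x.1 = y.1 :=
      take_sig_inj m hxa hya hxm hxi hii (congrArg Prod.fst hxy)
    exact Prod.ext haa (Prod.ext hii hjj)
  have hScard : S.card = 2^m * ((T+1) * 2^(m-1)) := by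
    rw [hS, Finset.card_image_of_injOn hinj, Finset.card_product, Finset.card_range, hGcard]
  have hSsub : S ⊆ (biVertices (2^m)).filter (fun p => biV (2^m) (mu m) p ≤ 5) := by
    intro p hp
    simp only [hS, Finset.mem_image] at hp
    obtain ⟨x, hx, rfl⟩ := hp
    simp only [Finset.mem_product, Finset.mem_range] at hx
    obtain ⟨hxa, hxG⟩ := hx
    obtain ⟨hxm, hxi, hxj, hxij⟩ := hmem _ hxG
    rw [Finset.mem_filter]
    constructor
    · simp only [hf, biVertices, Finset.mem_product]
      constructor <;>
        (apply mem_strings.2; simp only [List.length_take, sig_length, tau_length]; omega)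
    · exact biV_le m x.1 x.2.1 x.2.2 hxa hxi hxj hxij
  have hterm : ∀ p ∈ S, (((2:ℝ)^m)⁻¹)^2 ≤ (biIstar (2^m) (mu m) p)^2 := by
    intro p hp
    simp only [hS, Finset.mem_image] at hp
    obtain ⟨x, hx, rfl⟩ := hp
    simp only [Finset.mem_product, Finset.mem_range] at hx
    obtain ⟨hxa, hxG⟩ := hx
    obtain ⟨_, hxi, hxj, _⟩ := hmem _ hxG
    have := biIstar_lower m x.1 (Finset.mem_range.2 hxa) x.2.1 x.2.2 hxi hxj
    have h0 : (0:ℝ) ≤ ((2:ℝ)^m)⁻¹ := by positivity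
    exact pow_le_pow_left₀ h0 this 2
  calc ((2^r - r : ℕ) : ℝ) / 2
      = (S.card : ℝ) * (((2:ℝ)^m)⁻¹)^2 := by
        rw [hScard]
        have hmm : (2:ℝ)^m = 2 * (2:ℝ)^(m-1) := by
          rw [← pow_succ']; congr 1; omega
        have hTr : T + 1 = 2^r - r := by omega
        rw [hTr]
        push_cast
        rw [hmm]
        have : ((2:ℝ))^(m-1) ≠ 0 := by positivity
        field_simp
    _ = ∑ _p ∈ S, (((2:ℝ)^m)⁻¹)^2 := by rw [Finset.sum_const, nsmul_eq_mul]
    _ ≤ ∑ p ∈ S, (biIstar (2^m) (mu m) p)^2 := Finset.sum_le_sum hterm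
    _ ≤ biPartialEnergy (2^(2^r)) (mu (2^r)) 5 := by
        apply Finset.sum_le_sum_of_subset_of_nonneg hSsub
        intro p _ _
        positivity

/-- **No universal bound on partial energies of probability measures on the bi-tree**:
for every `F : (1,∞) → (0,∞)` there are `x > 1`, a depth `N` and a probability measure `μ`
on `∂T²` with `E_x[μ] > F(x)`. -/
theorem stmt13 : ∀ F : ℝ → ℝ, (∀ x, 1 < x → 0 < F x) →
    ∃ x : ℝ, 1 < x ∧ ∃ N : ℕ, 1 ≤ N ∧ ∃ μ : List Bool × List Bool → ℝ,
      IsBiMeasureOnBoundary N μ ∧ biMass N μ = 1 ∧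
      F x < biPartialEnergy N μ x := by
  intro F _
  obtain ⟨n, hn⟩ := exists_nat_gt (F 5)
  refine ⟨5, by norm_num, 2^(2^(n+1)), Nat.one_le_two_pow, mu (2^(n+1)),
    mu_boundary (2^(n+1)), mu_mass (2^(n+1)), ?_⟩
  have key := main_lower (n+1)
  have hnat : 2*n + (n+1) ≤ 2^(n+1) := by have := pow_ineq n; omega
  have hle : n + 1 ≤ 2^(n+1) := by have := pow_ineq n; omega
  have hcast : (n:ℝ) ≤ ((2^(n+1) - (n+1) : ℕ) : ℝ) / 2 := by
    rw [Nat.cast_sub hle]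
    push_cast
    have : (2*n : ℝ) ≤ (2:ℝ)^(n+1) - (n+1) := by
      have h2 : ((2*n + (n+1) : ℕ) : ℝ) ≤ ((2^(n+1) : ℕ) : ℝ) := Nat.cast_le.2 hnat
      push_cast at h2
      linarith
    linarith
  calc F 5 < n := hn
    _ ≤ ((2^(n+1) - (n+1) : ℕ) : ℝ) / 2 := hcast
    _ ≤ _ := key
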